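/- Let a countable directed multigraph G be given by countable sets E (edges) and V (vertices) with maps s, t : E → V. Define the incoming incidence operator I⁺ sending x : E → ℂ to the family ((∑_{e ∈ t⁻¹(v)} x_e))_{v∈V}, and the outgoing incidence operator I⁻ analogously with s in place of t. Then I⁺ and I⁻ are (well-defined) bounded operators from ℓ²(E) to ℓ²(V) — i.e. there is a constant c such that for every x ∈ ℓ²(E) and every v the family (x_e)_{e∈t⁻¹(v)} (resp. (x_e)_{e∈s⁻¹(v)}) is summable, the resulting vector lies in ℓ²(V), and its norm is at most c‖x‖_{ℓ²(E)} — if and only if G is uniformly locally finite, i.e. there is k ∈ ℕ with deg(v) := #t⁻¹(v) + #s⁻¹(v) ≤ k for all v ∈ V. -/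

import Mathlib

set_option maxHeartbeats 1000000

open scoped ENNReal

section aux

variable {E V : Type*}

lemma stmt15_fwd (c : ℝ) (f : E → V)
    (h : ∀ x : lp (fun _ : E => ℂ) 2, ∃ y : lp (fun _ : V => ℂ) 2,
      (∀ v : V, HasSum (fun e : (f ⁻¹' {v} : Set E) => x e) (y v)) ∧ ‖y‖ ≤ c * ‖x‖)
    (v : V) : (f ⁻¹' {v}).Finite ∧ ((f ⁻¹' {v}).ncard : ℝ) ≤ c ^ 2 := by
  classical
  have key : ∀ F : Finset E, ↑F ⊆ f ⁻¹' {v} → (F.card : ℝ) ≤ c ^ 2 := by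
    intro F hF
    set x0 : E → ℂ := fun e => if e ∈ F then 1 else 0 with hx0def
    have hx0z : ∀ e ∉ F, x0 e = 0 := by intro e he; simp [hx0def, he]
    have hmem : Memℓp x0 2 := by
      apply memℓp_gen
      apply summable_of_ne_finset_zero (s := F)
      intro e he
      simp only [hx0z e he, norm_zero]
      rw [Real.zero_rpow (by norm_num)]
    set x : lp (fun _ : E => ℂ) 2 := ⟨x0, hmem⟩ with hxdef
    have hxapp : ∀ e, x e = x0 e := fun e => rfl
    have htoReal : (2 : ℝ≥0∞).toReal = (2 : ℝ) := by norm_num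
    have hxnorm : ‖x‖ ^ (2 : ℝ) = (F.card : ℝ) := by
      have h1 := lp.norm_rpow_eq_tsum (p := 2) (by norm_num) x
      rw [htoReal] at h1
      rw [h1]
      have h2 : ∑' e : E, ‖x e‖ ^ (2 : ℝ) = ∑ e ∈ F, ‖x e‖ ^ (2 : ℝ) := by
        apply tsum_eq_sum
        intro e he
        rw [hxapp, hx0z e he]
        simp only [norm_zero]
        rw [Real.zero_rpow (by norm_num)]
      rw [h2]
      have hterm : ∀ e ∈ F, ‖x e‖ ^ (2 : ℝ) = 1 := by
        intro e he
        rw [hxapp]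
        simp [hx0def, he]
      rw [Finset.sum_congr rfl hterm]
      simp
    have hxnn : (0:ℝ) ≤ ‖x‖ := norm_nonneg _
    have hxval : ‖x‖ = Real.sqrt (F.card : ℝ) := by
      rw [← hxnorm, Real.rpow_two, Real.sqrt_sq hxnn]
    have hsum : HasSum (fun e : (f ⁻¹' {v} : Set E) => x0 e) ((F.card : ℂ)) := by
      refine (hasSum_subtype_iff_indicator (s := f ⁻¹' {v}) (f := x0)).mpr ?_
      have hind : (f ⁻¹' {v}).indicator x0 = x0 := by
        apply Set.indicator_eq_self.2
        intro e he
        rw [Function.mem_support] at he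
        by_contra heF
        exact he (hx0z e (by intro hmem'; exact heF (hF hmem')))
      rw [hind]
      have : HasSum x0 (∑ e ∈ F, x0 e) := hasSum_sum_of_ne_finset_zero (s := F) (f := x0) hx0z
      have hs : ∑ e ∈ F, x0 e = (F.card : ℂ) := by
        have hone : ∀ e ∈ F, x0 e = 1 := fun e he => by simp [hx0def, he]
        rw [Finset.sum_congr rfl hone, Finset.sum_const, nsmul_eq_mul, mul_one]
      rwa [hs] at this
    obtain ⟨y, hy, hyn⟩ := h x
    have hyv : y v = (F.card : ℂ) := HasSum.unique (hy v) hsum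
    have h3 : ‖y v‖ ≤ ‖y‖ := lp.norm_apply_le_norm (by norm_num) y v
    have h4 : (F.card : ℝ) ≤ c * Real.sqrt (F.card : ℝ) := by
      have hnv : ‖y v‖ = (F.card : ℝ) := by rw [hyv]; simp
      calc (F.card : ℝ) = ‖y v‖ := hnv.symm
        _ ≤ ‖y‖ := h3
        _ ≤ c * ‖x‖ := hyn
        _ = c * Real.sqrt (F.card : ℝ) := by rw [hxval]
    have h5 : Real.sqrt (F.card : ℝ) ^ 2 = (F.card : ℝ) := Real.sq_sqrt (by positivity)
    nlinarith [Real.sqrt_nonneg (F.card : ℝ), sq_nonneg (c - Real.sqrt (F.card : ℝ))]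
  have hfin : (f ⁻¹' {v}).Finite := by
    by_contra hinf
    obtain ⟨T, hTsub, hTfin, hTcard⟩ :=
      Set.Infinite.exists_subset_ncard_eq hinf (⌊c ^ 2⌋₊ + 1)
    have hc := key hTfin.toFinset (by rwa [Set.Finite.coe_toFinset])
    rw [← Set.ncard_eq_toFinset_card T hTfin, hTcard] at hc
    have := Nat.lt_floor_add_one (c ^ 2)
    push_cast at hc
    linarith
  refine ⟨hfin, ?_⟩
  have hc := key hfin.toFinset (by rw [Set.Finite.coe_toFinset])
  rwa [← Set.ncard_eq_toFinset_card _ hfin] at hc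


lemma stmt15_bwd (k : ℕ) (f : E → V) (hfin : ∀ v : V, (f ⁻¹' {v} : Set E).Finite)
    (hcard : ∀ v : V, (f ⁻¹' {v}).ncard ≤ k) (x : lp (fun _ : E => ℂ) 2) :
    ∃ y : lp (fun _ : V => ℂ) 2,
      (∀ v : V, HasSum (fun e : (f ⁻¹' {v} : Set E) => x e) (y v)) ∧ ‖y‖ ≤ (k : ℝ) * ‖x‖ := by
  classical
  have htoReal : (2 : ℝ≥0∞).toReal = (2 : ℝ) := by norm_num
  have hg : Summable (fun e : E => ‖x e‖ ^ (2 : ℝ)) := by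
    have hm := lp.memℓp x
    rw [memℓp_gen_iff (by norm_num)] at hm
    rwa [htoReal] at hm
  set g : E → ℝ := fun e => ‖x e‖ ^ (2 : ℝ) with hgdef
  set G : V → ℝ := fun v => ∑' e : (f ⁻¹' {v} : Set E), g e with hGdef
  have hGsum : HasSum G (∑' e, g e) := hg.hasSum.tsum_fiberwise f
  set y0 : V → ℂ := fun v => ∑' e : (f ⁻¹' {v} : Set E), x e with hy0def
  have hy0sum : ∀ v : V, HasSum (fun e : (f ⁻¹' {v} : Set E) => x e) (y0 v) := by
    intro v
    haveI : Finite (f ⁻¹' {v} : Set E) := (hfin v).to_subtype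
    exact Summable.of_finite.hasSum
  have hpt : ∀ v : V, ‖y0 v‖ ^ (2 : ℝ) ≤ (k : ℝ) * G v := by
    intro v
    haveI : Fintype (f ⁻¹' {v} : Set E) := (hfin v).fintype
    have hcardv : ((Fintype.card (f ⁻¹' {v} : Set E)) : ℝ) ≤ (k : ℝ) := by
      have hcc : Fintype.card (f ⁻¹' {v} : Set E) = (f ⁻¹' {v}).ncard := by
        rw [← Nat.card_coe_set_eq, Nat.card_eq_fintype_card]
      rw [hcc]
      exact_mod_cast hcard v
    have h1 : y0 v = ∑ e : (f ⁻¹' {v} : Set E), x e := tsum_fintype _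
    have h2 : ‖y0 v‖ ≤ ∑ e : (f ⁻¹' {v} : Set E), ‖x e‖ := by
      rw [h1]; exact norm_sum_le _ _
    have h3 : (∑ e : (f ⁻¹' {v} : Set E), ‖x e‖) ^ 2 ≤
        (Fintype.card (f ⁻¹' {v} : Set E) : ℝ) * ∑ e : (f ⁻¹' {v} : Set E), ‖x e‖ ^ 2 := by
      have := sq_sum_le_card_mul_sum_sq (s := (Finset.univ : Finset (f ⁻¹' {v} : Set E)))
        (f := fun e : (f ⁻¹' {v} : Set E) => ‖x e‖)
      simpa [Finset.card_univ] using this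
    have h4 : G v = ∑ e : (f ⁻¹' {v} : Set E), ‖x e‖ ^ (2 : ℝ) := tsum_fintype _
    have hsum_nn : (0 : ℝ) ≤ ∑ e : (f ⁻¹' {v} : Set E), ‖x e‖ ^ 2 := by positivity
    calc ‖y0 v‖ ^ (2 : ℝ) = ‖y0 v‖ ^ 2 := Real.rpow_two _
      _ ≤ (∑ e : (f ⁻¹' {v} : Set E), ‖x e‖) ^ 2 := by
          exact pow_le_pow_left₀ (norm_nonneg _) h2 2
      _ ≤ (Fintype.card (f ⁻¹' {v} : Set E) : ℝ) * ∑ e : (f ⁻¹' {v} : Set E), ‖x e‖ ^ 2 := h3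
      _ ≤ (k : ℝ) * ∑ e : (f ⁻¹' {v} : Set E), ‖x e‖ ^ 2 :=
          mul_le_mul_of_nonneg_right hcardv hsum_nn
      _ = (k : ℝ) * G v := by
          rw [h4]
          congr 1
          exact Finset.sum_congr rfl fun e _ => (Real.rpow_two _).symm
  have hsumy : Summable (fun v : V => ‖y0 v‖ ^ (2 : ℝ)) :=
    Summable.of_nonneg_of_le (fun v => by positivity) hpt (hGsum.summable.mul_left _)
  have hymem : Memℓp y0 2 := by
    apply memℓp_gen
    simp only [htoReal]
    exact hsumy
  set y : lp (fun _ : V => ℂ) 2 := ⟨y0, hymem⟩ with hydef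
  refine ⟨y, fun v => hy0sum v, ?_⟩
  have h5 : ‖y‖ ^ (2 : ℝ) = ∑' v, ‖y0 v‖ ^ (2 : ℝ) := by
    have hh := lp.norm_rpow_eq_tsum (p := 2) (by norm_num) y
    rwa [htoReal] at hh
  have h6 : ‖x‖ ^ (2 : ℝ) = ∑' e, g e := by
    have hh := lp.norm_rpow_eq_tsum (p := 2) (by norm_num) x
    rwa [htoReal] at hh
  have h7 : ‖y‖ ^ (2 : ℝ) ≤ (k : ℝ) * ‖x‖ ^ (2 : ℝ) := by
    rw [h5, h6]
    calc ∑' v, ‖y0 v‖ ^ (2 : ℝ) ≤ ∑' v, (k : ℝ) * G v :=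
          Summable.tsum_le_tsum hpt hsumy (hGsum.summable.mul_left _)
      _ = (k : ℝ) * ∑' e, g e := by rw [tsum_mul_left, hGsum.tsum_eq]
  have hk2 : (k : ℝ) ≤ (k : ℝ) ^ 2 := by exact_mod_cast Nat.le_self_pow two_ne_zero k
  have hb : (0 : ℝ) ≤ (k : ℝ) * ‖x‖ := by positivity
  have h8 : ‖y‖ ^ 2 ≤ ((k : ℝ) * ‖x‖) ^ 2 := by
    calc ‖y‖ ^ 2 = ‖y‖ ^ (2 : ℝ) := (Real.rpow_two _).symm
      _ ≤ (k : ℝ) * ‖x‖ ^ (2 : ℝ) := h7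
      _ = (k : ℝ) * ‖x‖ ^ 2 := by rw [Real.rpow_two]
      _ ≤ (k : ℝ) ^ 2 * ‖x‖ ^ 2 := mul_le_mul_of_nonneg_right hk2 (sq_nonneg _)
      _ = ((k : ℝ) * ‖x‖) ^ 2 := by ring
  nlinarith [norm_nonneg y, h8, hb, sq_nonneg (‖y‖ - (k : ℝ) * ‖x‖), sq_nonneg (‖y‖ + (k : ℝ) * ‖x‖)]

end aux

/-- For a countable directed multigraph `(E, V, s, t)`, the incoming and
outgoing incidence operators `I⁺ : x ↦ (∑_{e ∈ t⁻¹(v)} x e)_v` and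
`I⁻ : x ↦ (∑_{e ∈ s⁻¹(v)} x e)_v` are well-defined bounded operators from `ℓ²(E)` to
`ℓ²(V)` — i.e. there is a constant `c` such that for every `x ∈ ℓ²(E)` the fibre families
are summable, the resulting vectors lie in `ℓ²(V)` and have norm at most `c ‖x‖` — if and
only if the graph is uniformly locally finite, i.e. there is `k ∈ ℕ` bounding every degree
`deg v = #t⁻¹(v) + #s⁻¹(v)`. -/
theorem stmt15 {E V : Type*} [Countable E] [Countable V] (s t : E → V) :
    (∃ c : ℝ, ∀ x : lp (fun _ : E => ℂ) 2,
      (∃ y : lp (fun _ : V => ℂ) 2,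
        (∀ v : V, HasSum (fun e : (t ⁻¹' {v} : Set E) => x e) (y v)) ∧
        ‖y‖ ≤ c * ‖x‖) ∧
      (∃ y : lp (fun _ : V => ℂ) 2,
        (∀ v : V, HasSum (fun e : (s ⁻¹' {v} : Set E) => x e) (y v)) ∧
        ‖y‖ ≤ c * ‖x‖)) ↔
    (∃ k : ℕ, ∀ v : V, (t ⁻¹' {v}).Finite ∧ (s ⁻¹' {v}).Finite ∧
      (t ⁻¹' {v}).ncard + (s ⁻¹' {v}).ncard ≤ k) := by

  constructor
  · rintro ⟨c, hc⟩
    have ht := stmt15_fwd c t (fun x => (hc x).1)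
    have hs := stmt15_fwd c s (fun x => (hc x).2)
    refine ⟨⌊c ^ 2⌋₊ + ⌊c ^ 2⌋₊, fun v => ⟨(ht v).1, (hs v).1, ?_⟩⟩
    have h1 : (t ⁻¹' {v}).ncard ≤ ⌊c ^ 2⌋₊ := Nat.le_floor (by exact_mod_cast (ht v).2)
    have h2 : (s ⁻¹' {v}).ncard ≤ ⌊c ^ 2⌋₊ := Nat.le_floor (by exact_mod_cast (hs v).2)
    omega
  · rintro ⟨k, hk⟩
    refine ⟨(k : ℝ), fun x => ⟨?_, ?_⟩⟩
    · exact stmt15_bwd k t (fun v => (hk v).1)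
        (fun v => le_trans (Nat.le_add_right _ _) (hk v).2.2) x
    · exact stmt15_bwd k s (fun v => (hk v).2.1)
        (fun v => le_trans (Nat.le_add_left _ _) (hk v).2.2) x
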